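/- Generalized Singleton bound for the sum-rank metric: for any code C ⊆ F_{q^m}^N with at least two codewords, |C| ≤ q^{m(N − d_SR(C) + 1)}, where d_SR(C) is the minimum sum-rank distance of C. -/

import Mathlib

/-- A matrix whose rank is zero (over a field) is the zero matrix. -/
lemma aux_rank_zero {Fq : Type*} [Field Fq] {m : ℕ} {n : Type*} [Fintype n] [DecidableEq n]
    (M : Matrix (Fin m) n Fq) (h : M.rank = 0) : M = 0 := by
  have hbot : LinearMap.range M.mulVecLin = ⊥ := Submodule.finrank_eq_zero.mp h
  ext i j
  have h2 : M.mulVec (Pi.single j 1) = 0 := by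
    have : M.mulVec (Pi.single j 1) ∈ LinearMap.range M.mulVecLin := ⟨_, rfl⟩
    simpa [hbot] using this
  have := congrFun h2 i
  simpa [Matrix.mulVec_single_one] using this

/-- A matrix whose columns vanish outside a set `T` has rank at most `T.card`. -/
lemma aux_rank_le {Fq : Type*} [Field Fq] {m : ℕ} {n : Type*} [Fintype n] [DecidableEq n]
    (M : Matrix (Fin m) n Fq) (T : Finset n)
    (h : ∀ j ∉ T, ∀ i, M i j = 0) : M.rank ≤ T.card := by
  set Q : Matrix T n Fq := Matrix.of fun t j => if (t : n) = j then 1 else 0 with hQ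
  have hM : M = (M.submatrix id (Subtype.val : T → n)) * Q := by
    ext i j
    rw [Matrix.mul_apply]
    by_cases hj : j ∈ T
    · rw [Finset.sum_eq_single (⟨j, hj⟩ : T)]
      · simp [hQ]
      · intro t _ ht
        simp only [hQ, Matrix.of_apply]
        rw [if_neg (by simpa [Subtype.ext_iff] using ht)]
        ring
      · simp
    · rw [h j hj i]
      symm
      apply Finset.sum_eq_zero
      intro t _
      simp only [hQ, Matrix.of_apply]
      rw [if_neg (by rintro rfl; exact hj t.2)]
      ring
  rw [hM]
  calc (M.submatrix id (Subtype.val : T → n) * Q).rank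
      ≤ (M.submatrix id (Subtype.val : T → n)).rank := Matrix.rank_mul_le_left _ _
    _ ≤ Fintype.card T := Matrix.rank_le_card_width _
    _ = T.card := Fintype.card_coe T


/-- The matrix representation map with respect to an ordered basis `B`. -/
noncomputable def matrixRep {Fq Fqm : Type*} [Field Fq] [Field Fqm] [Algebra Fq Fqm]
    {m : ℕ} (B : Module.Basis (Fin m) Fq Fqm) {s : Type*} (c : s → Fqm) :
    Matrix (Fin m) s Fq :=
  Matrix.of fun i j => B.repr (c j) i

/-- The sum-rank distance for the partition `N = r 1 + ⋯ + r L`. -/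
noncomputable def sumRankDist {Fq Fqm : Type*} [Field Fq] [Field Fqm] [Algebra Fq Fqm]
    {m L : ℕ} (B : Module.Basis (Fin m) Fq Fqm) (r : Fin L → ℕ)
    (c d : (ℓ : Fin L) → Fin (r ℓ) → Fqm) : ℕ :=
  ∑ ℓ : Fin L, (matrixRep B (c ℓ) - matrixRep B (d ℓ)).rank

/-- Generalized Singleton bound for the sum-rank metric: for any code
`C ⊆ Fqm^N` with at least two codewords and minimum sum-rank distance `dmin`,
`|C| ≤ q ^ (m * (N - dmin + 1))` where `q = |Fq|` and `N = Σ ℓ, r ℓ`. -/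
theorem sumRank_singleton_bound {Fq Fqm : Type*} [Field Fq] [Fintype Fq] [Field Fqm]
    [Algebra Fq Fqm] {m L : ℕ} (B : Module.Basis (Fin m) Fq Fqm) (r : Fin L → ℕ)
    (C : Finset ((ℓ : Fin L) → Fin (r ℓ) → Fqm)) (hC : 2 ≤ C.card)
    (dmin : ℕ)
    (hd : IsLeast {k | ∃ c ∈ C, ∃ d ∈ C, c ≠ d ∧ sumRankDist B r c d = k} dmin) :
    C.card ≤ (Fintype.card Fq) ^ (m * ((∑ ℓ, r ℓ) - dmin + 1)) := by
  classical
  obtain ⟨⟨c0, hc0, d0, hd0, hne0, hdist0⟩, hlb⟩ := hd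
  set N := ∑ ℓ, r ℓ with hN
  -- dmin ≥ 1
  have hd1 : 1 ≤ dmin := by
    rcases Nat.eq_zero_or_pos dmin with h0 | h; swap
    · exact h
    exfalso
    apply hne0
    have hall : ∀ ℓ, (matrixRep B (c0 ℓ) - matrixRep B (d0 ℓ)).rank = 0 := by
      have := hdist0
      rw [h0, sumRankDist, Finset.sum_eq_zero_iff] at this
      exact fun ℓ => this ℓ (Finset.mem_univ ℓ)
    funext ℓ j
    have hz := aux_rank_zero _ (hall ℓ)
    apply B.repr.injective
    ext i
    have := congrFun (congrFun hz i) j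
    simp only [Matrix.sub_apply, Matrix.zero_apply, matrixRep, Matrix.of_apply] at this
    exact sub_eq_zero.mp this
  -- dmin ≤ N
  have hdN : dmin ≤ N := by
    rw [← hdist0, sumRankDist, hN]
    refine Finset.sum_le_sum fun ℓ _ => ?_
    exact (Matrix.rank_le_card_width _).trans (Fintype.card_fin _).le
  -- choose a subset S of coordinates of size N - dmin + 1
  have hcard : Fintype.card ((ℓ : Fin L) × Fin (r ℓ)) = N := by
    simp [Fintype.card_sigma, hN]
  obtain ⟨S, -, hS⟩ := Finset.exists_subset_card_eq
    (s := (Finset.univ : Finset ((ℓ : Fin L) × Fin (r ℓ)))) (n := N - dmin + 1)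
    (by rw [Finset.card_univ, hcard]; omega)
  -- the punctured map
  set f : ((ℓ : Fin L) → Fin (r ℓ) → Fqm) → (S → Fin m → Fq) :=
    fun c x i => B.repr (c x.1.1 x.1.2) i with hf
  have hinj : Set.InjOn f C := by
    intro c hc d hdm hfcd
    by_contra hne
    have hlow : dmin ≤ sumRankDist B r c d := hlb ⟨c, hc, d, hdm, hne, rfl⟩
    set T : (ℓ : Fin L) → Finset (Fin (r ℓ)) :=
      fun ℓ => Finset.univ.filter (fun j => (⟨ℓ, j⟩ : (ℓ : Fin L) × Fin (r ℓ)) ∉ S) with hT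
    have hrank : ∀ ℓ, (matrixRep B (c ℓ) - matrixRep B (d ℓ)).rank ≤ (T ℓ).card := by
      intro ℓ
      apply aux_rank_le
      intro j hj i
      have hjS : (⟨ℓ, j⟩ : (ℓ : Fin L) × Fin (r ℓ)) ∈ S := by
        by_contra hc'
        exact hj (by simp [hT, hc'])
      have := congrFun (congrFun hfcd ⟨⟨ℓ, j⟩, hjS⟩) i
      simp only [hf] at this
      simp [matrixRep, this]
    have hsum : ∑ ℓ, (T ℓ).card = N - S.card := by
      have hcompl : Sᶜ = Finset.univ.sigma T := by
        ext ⟨ℓ, j⟩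
        simp [hT]
      calc ∑ ℓ, (T ℓ).card = (Finset.univ.sigma T).card := (Finset.card_sigma _ _).symm
        _ = Sᶜ.card := by rw [hcompl]
        _ = N - S.card := by rw [Finset.card_compl, Fintype.card_sigma]; simp [hN]
    have : sumRankDist B r c d ≤ dmin - 1 := by
      calc sumRankDist B r c d ≤ ∑ ℓ, (T ℓ).card := Finset.sum_le_sum fun ℓ _ => hrank ℓ
        _ = N - S.card := hsum
        _ = dmin - 1 := by rw [hS]; omega
    omega
  have hle : C.card ≤ Fintype.card (S → Fin m → Fq) := by
    rw [← Fintype.card_coe C]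
    exact Fintype.card_le_of_injective (fun x => f x.1)
      (fun x y hxy => Subtype.ext (hinj x.2 y.2 hxy))
  calc C.card ≤ Fintype.card (S → Fin m → Fq) := hle
    _ = Fintype.card Fq ^ (m * (N - dmin + 1)) := by
        rw [Fintype.card_fun, Fintype.card_fun, Fintype.card_coe, hS, Fintype.card_fin,
          ← pow_mul, mul_comm m]
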